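/- Let A be a C*-algebra, let Γ be a finite group acting on A by *-automorphisms via α, let A^α be the fixed point subalgebra, and let ω be an ultrafilter on ℕ. Let (v_n)_{n∈ℕ} be a bounded sequence of elements of A^α such that for every b ∈ A^α the norms ‖v_n* v_n b − b‖, ‖v_n v_n* b − b‖, ‖b v_n* v_n − b‖, and ‖b v_n v_n* − b‖ all converge to 0 along ω. Then for every a ∈ A the norms ‖v_n* v_n a − a‖, ‖v_n v_n* a − a‖, ‖a v_n* v_n − a‖, and ‖a v_n v_n* − a‖ all converge to 0 along ω. -/

import Mathlib

open Filter

section Aux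
variable {A : Type*} [NonUnitalRing A] [StarRing A] [PartialOrder A] [StarOrderedRing A]

lemma phi_nonneg (e r : A) (he : star e = e) (hr : 0 ≤ r) :
    0 ≤ r - e * r - r * e + e * r * e := by
  rw [StarOrderedRing.nonneg_iff] at hr
  induction hr using AddSubmonoid.closure_induction with
  | mem x hx =>
    obtain ⟨s, rfl⟩ := hx
    have key : star s * s - e * (star s * s) - (star s * s) * e + e * (star s * s) * e
        = star (s - s * e) * (s - s * e) := by
      simp only [star_sub, star_mul, he]
      noncomm_ring
    rw [key]
    exact star_mul_self_nonneg _
  | zero => simp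
  | add x y _ _ hx hy =>
    have : (x + y) - e * (x + y) - (x + y) * e + e * (x + y) * e
        = (x - e * x - x * e + e * x * e) + (y - e * y - y * e + e * y * e) := by
      noncomm_ring
    rw [this]
    exact add_nonneg hx hy

end Aux

section Core
variable {A : Type*} [NonUnitalNormedRing A] [StarRing A] [CStarRing A]
    [PartialOrder A] [StarOrderedRing A] [CompleteSpace A]
    [NormedSpace ℂ A] [IsScalarTower ℂ A A] [SMulCommClass ℂ A A] [StarModule ℂ A]

lemma core_est (e b c : A) (he : star e = e) (hc : 0 ≤ c) (hcb : c ≤ b) :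
    ‖c - e * c - c * e + e * c * e‖ ≤ (1 + ‖e‖) * ‖b - e * b‖ := by
  letI : NonUnitalCStarAlgebra A := { }
  have hX : (0:A) ≤ c - e * c - c * e + e * c * e := phi_nonneg e c he hc
  have hXY : c - e * c - c * e + e * c * e ≤ b - e * b - b * e + e * b * e := by
    have h1 : (0:A) ≤ (b - c) - e * (b - c) - (b - c) * e + e * (b - c) * e :=
      phi_nonneg e (b - c) he (by simpa using hcb)
    have h2 : (b - c) - e * (b - c) - (b - c) * e + e * (b - c) * e
        = (b - e * b - b * e + e * b * e) - (c - e * c - c * e + e * c * e) := by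
      noncomm_ring
    rw [h2] at h1
    exact sub_nonneg.mp h1
  calc ‖c - e * c - c * e + e * c * e‖
      ≤ ‖b - e * b - b * e + e * b * e‖ :=
        CStarAlgebra.norm_le_norm_of_nonneg_of_le hX hXY
    _ = ‖(b - e * b) - (b - e * b) * e‖ := by congr 1; noncomm_ring
    _ ≤ ‖b - e * b‖ + ‖(b - e * b) * e‖ := norm_sub_le _ _
    _ ≤ ‖b - e * b‖ + ‖b - e * b‖ * ‖e‖ := by
        gcongr; exact norm_mul_le _ _
    _ = (1 + ‖e‖) * ‖b - e * b‖ := by ring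

lemma core_est' (e b c : A) (he : star e = e) (hc : 0 ≤ c) (hcb : c ≤ b) :
    ‖c - e * c - c * e + e * c * e‖ ≤ (1 + ‖e‖) * ‖b - b * e‖ := by
  letI : NonUnitalCStarAlgebra A := { }
  have hX : (0:A) ≤ c - e * c - c * e + e * c * e := phi_nonneg e c he hc
  have hXY : c - e * c - c * e + e * c * e ≤ b - e * b - b * e + e * b * e := by
    have h1 : (0:A) ≤ (b - c) - e * (b - c) - (b - c) * e + e * (b - c) * e :=
      phi_nonneg e (b - c) he (by simpa using hcb)
    have h2 : (b - c) - e * (b - c) - (b - c) * e + e * (b - c) * e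
        = (b - e * b - b * e + e * b * e) - (c - e * c - c * e + e * c * e) := by
      noncomm_ring
    rw [h2] at h1
    exact sub_nonneg.mp h1
  calc ‖c - e * c - c * e + e * c * e‖
      ≤ ‖b - e * b - b * e + e * b * e‖ :=
        CStarAlgebra.norm_le_norm_of_nonneg_of_le hX hXY
    _ = ‖(b - b * e) - e * (b - b * e)‖ := by congr 1; noncomm_ring
    _ ≤ ‖b - b * e‖ + ‖e * (b - b * e)‖ := norm_sub_le _ _
    _ ≤ ‖b - b * e‖ + ‖e‖ * ‖b - b * e‖ := by
        gcongr; exact norm_mul_le _ _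
    _ = (1 + ‖e‖) * ‖b - b * e‖ := by ring

lemma conclude_tendsto {ω : Filter ℕ} (u : ℕ → A) (g : ℕ → ℝ)
    (h : ∀ n, ‖u n‖ ^ 2 ≤ g n) (hg : Tendsto g ω (nhds 0)) :
    Tendsto (fun n => ‖u n‖) ω (nhds 0) := by
  have hsq : Tendsto (fun n => ‖u n‖ ^ 2) ω (nhds 0) :=
    squeeze_zero (fun n => by positivity) h hg
  have : Tendsto (fun n => Real.sqrt (‖u n‖ ^ 2)) ω (nhds (Real.sqrt 0)) :=
    (Real.continuous_sqrt.tendsto 0).comp hsq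
  simpa [Real.sqrt_sq (norm_nonneg _)] using this

end Core

section Master
variable {A : Type*} [NonUnitalNormedRing A] [StarRing A] [CStarRing A]
    [PartialOrder A] [StarOrderedRing A] [CompleteSpace A]
    [NormedSpace ℂ A] [IsScalarTower ℂ A A] [SMulCommClass ℂ A A] [StarModule ℂ A]

lemma master {ω : Filter ℕ} {K : ℝ} (e : ℕ → A) (he : ∀ n, star (e n) = e n)
    (hbd : ∀ n, ‖e n‖ ≤ K) (b c : A) (hc : 0 ≤ c) (hcb : c ≤ b) (u : ℕ → A)
    (hu : ∀ n, ‖u n‖ ^ 2 = ‖c - e n * c - c * e n + e n * c * e n‖)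
    (hconv : Tendsto (fun n => ‖b - e n * b‖) ω (nhds 0)) :
    Tendsto (fun n => ‖u n‖) ω (nhds 0) := by
  apply conclude_tendsto u (fun n => (1 + K) * ‖b - e n * b‖)
  · intro n
    rw [hu n]
    calc ‖c - e n * c - c * e n + e n * c * e n‖
        ≤ (1 + ‖e n‖) * ‖b - e n * b‖ := core_est (e n) b c (he n) hc hcb
      _ ≤ (1 + K) * ‖b - e n * b‖ := by gcongr; exact hbd n
  · simpa using hconv.const_mul (1 + K)

lemma master' {ω : Filter ℕ} {K : ℝ} (e : ℕ → A) (he : ∀ n, star (e n) = e n)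
    (hbd : ∀ n, ‖e n‖ ≤ K) (b c : A) (hc : 0 ≤ c) (hcb : c ≤ b) (u : ℕ → A)
    (hu : ∀ n, ‖u n‖ ^ 2 = ‖c - e n * c - c * e n + e n * c * e n‖)
    (hconv : Tendsto (fun n => ‖b - b * e n‖) ω (nhds 0)) :
    Tendsto (fun n => ‖u n‖) ω (nhds 0) := by
  apply conclude_tendsto u (fun n => (1 + K) * ‖b - b * e n‖)
  · intro n
    rw [hu n]
    calc ‖c - e n * c - c * e n + e n * c * e n‖
        ≤ (1 + ‖e n‖) * ‖b - b * e n‖ := core_est' (e n) b c (he n) hc hcb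
      _ ≤ (1 + K) * ‖b - b * e n‖ := by gcongr; exact hbd n
  · simpa using hconv.const_mul (1 + K)

end Master

/-- If `Γ` is a finite group acting on a C*-algebra `A` by
*-automorphisms, `ω` is an ultrafilter on `ℕ`, and `(v_n)` is a bounded sequence
in the fixed point subalgebra `A^α` such that `v_n* v_n b → b`, `v_n v_n* b → b`,
`b v_n* v_n → b`, `b v_n v_n* → b` (in norm, along `ω`) for every `b ∈ A^α`, then
the same convergences hold for every `a ∈ A`. -/
theorem stmt3 {A : Type*} [NonUnitalNormedRing A] [StarRing A] [CStarRing A]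
    [PartialOrder A] [StarOrderedRing A] [CompleteSpace A]
    [NormedSpace ℂ A] [IsScalarTower ℂ A A] [SMulCommClass ℂ A A] [StarModule ℂ A]
    {Γ : Type*} [Group Γ] [Finite Γ]
    (α : Γ → (A ≃⋆ₐ[ℂ] A))
    (hone : ∀ a : A, α 1 a = a)
    (hmul : ∀ g g' : Γ, ∀ a : A, α (g * g') a = α g (α g' a))
    (ω : Ultrafilter ℕ)
    (v : ℕ → A)
    (hbdd : ∃ C : ℝ, ∀ n, ‖v n‖ ≤ C)
    (hfix : ∀ n, ∀ g : Γ, α g (v n) = v n)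
    (happrox : ∀ b : A, (∀ g : Γ, α g b = b) →
      Tendsto (fun n => ‖star (v n) * v n * b - b‖) (ω : Filter ℕ) (nhds 0) ∧
      Tendsto (fun n => ‖v n * star (v n) * b - b‖) (ω : Filter ℕ) (nhds 0) ∧
      Tendsto (fun n => ‖b * (star (v n) * v n) - b‖) (ω : Filter ℕ) (nhds 0) ∧
      Tendsto (fun n => ‖b * (v n * star (v n)) - b‖) (ω : Filter ℕ) (nhds 0)) :
    ∀ a : A,
      Tendsto (fun n => ‖star (v n) * v n * a - a‖) (ω : Filter ℕ) (nhds 0) ∧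
      Tendsto (fun n => ‖v n * star (v n) * a - a‖) (ω : Filter ℕ) (nhds 0) ∧
      Tendsto (fun n => ‖a * (star (v n) * v n) - a‖) (ω : Filter ℕ) (nhds 0) ∧
      Tendsto (fun n => ‖a * (v n * star (v n)) - a‖) (ω : Filter ℕ) (nhds 0) := by
  intro a
  obtain ⟨C, hC⟩ := hbdd
  have hC0 : 0 ≤ C := (norm_nonneg (v 0)).trans (hC 0)
  haveI : Fintype Γ := Fintype.ofFinite Γ
  -- the averaged elements
  have bfix : ∀ x : A, ∀ g : Γ, α g (∑ h : Γ, α h x) = ∑ h : Γ, α h x := by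
    intro x g
    rw [map_sum]
    refine Fintype.sum_bijective (fun h => g * h) (Group.mulLeft_bijective g) _ _ ?_
    intro h
    rw [hmul]
  have ble : ∀ x : A, x * star x ≤ ∑ h : Γ, α h (x * star x) := by
    intro x
    have h1 := Finset.single_le_sum (f := fun h : Γ => α h (x * star x))
      (fun h _ => by show (0:A) ≤ α h (x * star x); rw [map_mul, map_star]; exact mul_star_self_nonneg _)
      (Finset.mem_univ 1)
    simpa only [hone] using h1
  -- selfadjointness and bounds of e n = v n * star (v n) etc.
  have hse : ∀ n, star (star (v n) * v n) = star (v n) * v n := fun n => by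
    rw [star_mul, star_star]
  have hsf : ∀ n, star (v n * star (v n)) = v n * star (v n) := fun n => by
    rw [star_mul, star_star]
  have hbe : ∀ n, ‖star (v n) * v n‖ ≤ C * C := fun n =>
    (norm_mul_le _ _).trans (by rw [norm_star]; exact mul_le_mul (hC n) (hC n) (norm_nonneg _) hC0)
  have hbf : ∀ n, ‖v n * star (v n)‖ ≤ C * C := fun n =>
    (norm_mul_le _ _).trans (by rw [norm_star]; exact mul_le_mul (hC n) (hC n) (norm_nonneg _) hC0)
  obtain ⟨h1, h2, h3, h4⟩ := happrox (∑ h : Γ, α h (a * star a)) (bfix (a * star a))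
  obtain ⟨h1', h2', h3', h4'⟩ := happrox (∑ h : Γ, α h (star a * a)) (bfix (star a * a))
  refine ⟨?_, ?_, ?_, ?_⟩
  · refine master (fun n => star (v n) * v n) hse hbe _ _ (mul_star_self_nonneg a) (ble a)
      _ (fun n => ?_) (by simpa [norm_sub_rev] using h1)
    beta_reduce
    rw [sq, ← CStarRing.norm_self_mul_star]
    congr 1
    have hst : star (star (v n) * v n * a - a) = star a * (star (v n) * v n) - star a := by
      simp [star_sub, star_mul, mul_assoc]
    rw [hst]
    noncomm_ring
  · refine master (fun n => v n * star (v n)) hsf hbf _ _ (mul_star_self_nonneg a) (ble a)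
      _ (fun n => ?_) (by simpa [norm_sub_rev] using h2)
    beta_reduce
    rw [sq, ← CStarRing.norm_self_mul_star]
    congr 1
    have hst : star (v n * star (v n) * a - a) = star a * (v n * star (v n)) - star a := by
      simp [star_sub, star_mul, mul_assoc]
    rw [hst]
    noncomm_ring
  · refine master' (fun n => star (v n) * v n) hse hbe _ _ (star_mul_self_nonneg a)
      (by simpa using ble (star a)) _ (fun n => ?_) (by simpa [norm_sub_rev] using h3')
    beta_reduce
    rw [sq, ← CStarRing.norm_star_mul_self]
    congr 1
    have hst : star (a * (star (v n) * v n) - a) = star (v n) * v n * star a - star a := by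
      simp [star_sub, star_mul, mul_assoc]
    rw [hst]
    noncomm_ring
  · refine master' (fun n => v n * star (v n)) hsf hbf _ _ (star_mul_self_nonneg a)
      (by simpa using ble (star a)) _ (fun n => ?_) (by simpa [norm_sub_rev] using h4')
    beta_reduce
    rw [sq, ← CStarRing.norm_star_mul_self]
    congr 1
    have hst : star (a * (v n * star (v n)) - a) = v n * star (v n) * star a - star a := by
      simp [star_sub, star_mul, mul_assoc]
    rw [hst]
    noncomm_ring
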